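/- For every n ≥ 0 and every real x, the n-th derivative of sech at x equals sech(x) · Σ_{k=0}^{n} (−1)^{(n+k)/2} · k! · S(n,k) · tanh(x)^k, where the sum runs over k with n ≡ k (mod 2) (terms with opposite parity vanish since S(n,k) = 0 there). -/

import Mathlib

open Real Finset

/-- Tangent numbers: tan t = Σ Tₙ tⁿ/n!. -/
noncomputable def tangentNumber (n : ℕ) : ℝ := iteratedDeriv n Real.tan 0

/-- Secant numbers: sec t = Σ Sₙ tⁿ/n!. -/
noncomputable def secantNumber (n : ℕ) : ℝ := iteratedDeriv n (fun t : ℝ => 1 / Real.cos t) 0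

/-- Higher-order tangent numbers: tanᵏ t / k! = Σ T(n,k) tⁿ/n!. -/
noncomputable def T (n k : ℕ) : ℝ :=
  iteratedDeriv n (fun t : ℝ => Real.tan t ^ k) 0 / (Nat.factorial k : ℝ)

/-- Higher-order secant numbers: sec t · tanᵏ t / k! = Σ S(n,k) tⁿ/n!. -/
noncomputable def S (n k : ℕ) : ℝ :=
  iteratedDeriv n (fun t : ℝ => Real.tan t ^ k / Real.cos t) 0 / (Nat.factorial k : ℝ)

/-- Higher-order arctangent numbers: arctanᵏ t / k! = Σ T*(n,k) tⁿ/n!. -/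
noncomputable def Tstar (n k : ℕ) : ℝ :=
  iteratedDeriv n (fun t : ℝ => Real.arctan t ^ k) 0 / (Nat.factorial k : ℝ)

/-- Binomial coefficient with integer lower index (0 if lower index is negative). -/
noncomputable def chooseZ (a : ℕ) (b : ℤ) : ℝ :=
  if 0 ≤ b then (a.choose b.toNat : ℝ) else 0

lemma hasDerivAt_tanh (x : ℝ) : HasDerivAt Real.tanh (1 / Real.cosh x ^ 2) x := by
  have h := (Real.hasDerivAt_sinh x).div (Real.hasDerivAt_cosh x) (ne_of_gt (Real.cosh_pos x))
  have : (fun y => Real.sinh y / Real.cosh y) = Real.tanh := by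
    funext y; rw [Real.tanh_eq_sinh_div_cosh]
  rw [show Real.sinh / Real.cosh = Real.tanh from this] at h
  refine h.congr_deriv ?_
  have hc := Real.cosh_sq_sub_sinh_sq x
  rw [show Real.cosh x * Real.cosh x - Real.sinh x * Real.sinh x = 1 by nlinarith]

lemma sech_sq_eq (x : ℝ) : 1 / Real.cosh x ^ 2 = 1 - Real.tanh x ^ 2 := by
  have hc : Real.cosh x ≠ 0 := ne_of_gt (Real.cosh_pos x)
  have hcs := Real.cosh_sq_sub_sinh_sq x
  rw [Real.tanh_eq_sinh_div_cosh]
  field_simp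
  linarith

lemma hasDerivAt_sech_mul (k : ℕ) (x : ℝ) :
    HasDerivAt (fun t => 1 / Real.cosh t * Real.tanh t ^ k)
      ((k : ℝ) * (1 / Real.cosh x * Real.tanh x ^ (k - 1)) -
        ((k : ℝ) + 1) * (1 / Real.cosh x * Real.tanh x ^ (k + 1))) x := by
  have hc : Real.cosh x ≠ 0 := ne_of_gt (Real.cosh_pos x)
  have hsech : HasDerivAt (fun t => 1 / Real.cosh t) (-(Real.sinh x / Real.cosh x ^ 2)) x := by
    have := (Real.hasDerivAt_cosh x).fun_inv hc
    simpa [one_div, neg_div] using this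
  have h := hsech.mul ((hasDerivAt_tanh x).pow k)
  refine h.congr_deriv ?_
  have h2 : Real.sinh x / Real.cosh x ^ 2 = Real.tanh x * (1 / Real.cosh x) := by
    rw [Real.tanh_eq_sinh_div_cosh]; ring
  rcases k with _ | m
  · rw [h2, sech_sq_eq, Pi.pow_apply]; push_cast; ring
  · simp only [Nat.add_sub_cancel, Pi.pow_apply]
    rw [h2, sech_sq_eq]; push_cast; ring


lemma hasDerivAt_tansec (k : ℕ) {t : ℝ} (h : Real.cos t ≠ 0) :
    HasDerivAt (fun t => Real.tan t ^ k / Real.cos t)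
      ((k : ℝ) * (Real.tan t ^ (k - 1) / Real.cos t) +
        ((k : ℝ) + 1) * (Real.tan t ^ (k + 1) / Real.cos t)) t := by
  have hinv : HasDerivAt (fun t => 1 / Real.cos t) (Real.sin t / Real.cos t ^ 2) t := by
    have := (Real.hasDerivAt_cos t).fun_inv h
    simpa [one_div, neg_div] using this
  have hh := ((Real.hasDerivAt_tan h).pow k).mul hinv
  have hfun : (fun t => Real.tan t ^ k / Real.cos t)
      = fun t => Real.tan t ^ k * (1 / Real.cos t) := by
    funext y; rw [mul_one_div]
  rw [hfun]
  refine hh.congr_deriv ?_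
  have h1 : 1 / Real.cos t ^ 2 = 1 + Real.tan t ^ 2 := by
    rw [Real.tan_eq_sin_div_cos, div_pow]
    field_simp
    linarith [Real.cos_sq_add_sin_sq t]
  have h2 : Real.sin t / Real.cos t ^ 2 = Real.tan t * (1 / Real.cos t) := by
    rw [Real.tan_eq_sin_div_cos]; ring
  simp only [div_eq_mul_one_div (Real.tan t ^ _)]
  rcases k with _ | m
  · rw [h2, h1, Pi.pow_apply]; push_cast; ring
  · simp only [Nat.add_sub_cancel, Pi.pow_apply]
    rw [h2, h1]; push_cast; ring

noncomputable def cS (n k : ℕ) : ℝ :=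
  iteratedDeriv n (fun t : ℝ => Real.tan t ^ k / Real.cos t) 0

lemma contDiffOn_tansec (k : ℕ) (n : ℕ∞) :
    ContDiffOn ℝ n (fun t : ℝ => Real.tan t ^ k / Real.cos t) {t : ℝ | Real.cos t ≠ 0} := by
  intro t ht
  exact (((Real.contDiffAt_tan.2 ht).pow k).div Real.contDiff_cos.contDiffAt ht).contDiffWithinAt

lemma isOpen_coszero : IsOpen {t : ℝ | Real.cos t ≠ 0} :=
  isOpen_compl_singleton.preimage Real.continuous_cos

lemma mem_coszero : (0 : ℝ) ∈ {t : ℝ | Real.cos t ≠ 0} := by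
  simp [Real.cos_zero]

lemma iteratedDerivWithin_isOpen {s : Set ℝ} (hs : IsOpen s) {x : ℝ} (hx : x ∈ s)
    (f : ℝ → ℝ) (n : ℕ) : iteratedDerivWithin n f s x = iteratedDeriv n f x := by
  rw [iteratedDerivWithin, iteratedDeriv, iteratedFDerivWithin_of_isOpen n hs hx]

lemma cS_succ (n k : ℕ) :
    cS (n + 1) k = k * cS n (k - 1) + (k + 1) * cS n (k + 1) := by
  set s : Set ℝ := {t : ℝ | Real.cos t ≠ 0} with hs
  have hso := isOpen_coszero
  have hmem := mem_coszero
  have hud : UniqueDiffOn ℝ s := hso.uniqueDiffOn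
  rw [cS, iteratedDeriv_succ']
  have hev : deriv (fun t : ℝ => Real.tan t ^ k / Real.cos t) =ᶠ[nhds (0:ℝ)]
      (fun t : ℝ => (k : ℝ) * (Real.tan t ^ (k-1) / Real.cos t)
        + ((k : ℝ) + 1) * (Real.tan t ^ (k+1) / Real.cos t)) := by
    filter_upwards [hso.mem_nhds hmem] with t ht
    exact (hasDerivAt_tansec k ht).deriv
  rw [hev.iteratedDeriv_eq n]
  rw [← iteratedDerivWithin_isOpen hso hmem]
  have hadd := iteratedDerivWithin_add (f := fun t : ℝ => (k : ℝ) * (Real.tan t ^ (k-1) / Real.cos t))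
    (g := fun t : ℝ => ((k : ℝ) + 1) * (Real.tan t ^ (k+1) / Real.cos t)) (n := n)
    hmem hud ((((contDiffOn_tansec (k-1) n).const_smul ((k:ℝ))).congr (fun t _ => by simp [smul_eq_mul])) 0 hmem)
    ((((contDiffOn_tansec (k+1) n).const_smul ((k:ℝ)+1)).congr (fun t _ => by simp [smul_eq_mul])) 0 hmem)
  rw [show (fun t : ℝ => (k : ℝ) * (Real.tan t ^ (k-1) / Real.cos t)
        + ((k : ℝ) + 1) * (Real.tan t ^ (k+1) / Real.cos t)) =
      ((fun t : ℝ => (k : ℝ) * (Real.tan t ^ (k-1) / Real.cos t)) +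
       (fun t : ℝ => ((k : ℝ) + 1) * (Real.tan t ^ (k+1) / Real.cos t))) from rfl, hadd]
  rw [iteratedDerivWithin_const_mul hmem hud _ (contDiffOn_tansec (k-1) n 0 hmem),
      iteratedDerivWithin_const_mul hmem hud _ (contDiffOn_tansec (k+1) n 0 hmem),
      iteratedDerivWithin_isOpen hso hmem, iteratedDerivWithin_isOpen hso hmem]
  rfl

lemma cS_zero (k : ℕ) : cS 0 k = if k = 0 then 1 else 0 := by
  rw [cS, iteratedDeriv_zero]
  rcases k with _ | m <;> simp [Real.tan_zero, Real.cos_zero]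

lemma cS_eq_zero_of_lt : ∀ n k : ℕ, n < k → cS n k = 0 := by
  intro n
  induction n with
  | zero => intro k hk; rw [cS_zero]; have : k ≠ 0 := by omega
            simp [this]
  | succ n ih =>
    intro k hk
    rw [cS_succ]
    rcases k with _ | m
    · omega
    · simp only [Nat.add_sub_cancel]
      rw [ih m (by omega), ih (m + 2) (by omega)]
      push_cast; ring

lemma cS_eq_zero_of_parity : ∀ n k : ℕ, n % 2 ≠ k % 2 → cS n k = 0 := by
  intro n
  induction n with
  | zero => intro k hk; rw [cS_zero]; have : k ≠ 0 := by omega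
            simp [this]
  | succ n ih =>
    intro k hk
    rw [cS_succ]
    rcases k with _ | m
    · rw [ih 1 (by omega)]; push_cast; ring
    · simp only [Nat.add_sub_cancel]
      rw [ih m (by omega), ih (m + 2) (by omega)]; push_cast; ring

noncomputable def aS (n k : ℕ) : ℝ := (-1) ^ ((n + k) / 2) * cS n k

lemma aS_eq_zero_of_lt (n k : ℕ) (h : n < k) : aS n k = 0 := by
  rw [aS, cS_eq_zero_of_lt n k h, mul_zero]

lemma aS_succ (n k : ℕ) : aS (n + 1) k = (k + 1) * aS n (k + 1) - k * aS n (k - 1) := by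
  rw [aS, aS, aS, cS_succ]
  rcases k with _ | m
  · push_cast; ring_nf
  · simp only [Nat.add_sub_cancel]
    have h2 : (n + 1 + (m + 1)) / 2 = (n + m) / 2 + 1 := by omega
    have h3 : (n + (m + 1 + 1)) / 2 = (n + m) / 2 + 1 := by omega
    rw [h2, h3, pow_succ]
    push_cast; ring

lemma sum_step (n : ℕ) (g : ℕ → ℝ) :
    ∑ k ∈ range (n + 1), aS n k * ((k : ℝ) * g (k - 1) - ((k : ℝ) + 1) * g (k + 1))
      = ∑ j ∈ range (n + 2), aS (n + 1) j * g j := by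
  simp_rw [aS_succ, sub_mul, mul_sub]
  rw [Finset.sum_sub_distrib, Finset.sum_sub_distrib]
  congr 1
  · conv_rhs => rw [Finset.sum_range_succ, Finset.sum_range_succ]
    rw [aS_eq_zero_of_lt n (n + 2) (by omega), aS_eq_zero_of_lt n (n + 1) (by omega)]
    conv_lhs => rw [Finset.sum_range_succ']
    simp only [Nat.add_sub_cancel, Nat.cast_zero, zero_mul, mul_zero, add_zero, zero_mul,
      mul_zero, sub_zero]
    refine Finset.sum_congr rfl fun i _ => ?_
    push_cast; ring
  · conv_rhs => rw [Finset.sum_range_succ']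
    simp only [Nat.add_sub_cancel, Nat.cast_zero, zero_mul, mul_zero, add_zero, zero_mul]
    refine Finset.sum_congr rfl fun i _ => ?_
    push_cast; ring

lemma main_A (n : ℕ) (x : ℝ) :
    iteratedDeriv n (fun t : ℝ => 1 / Real.cosh t) x
      = ∑ k ∈ range (n + 1), aS n k * (1 / Real.cosh x * Real.tanh x ^ k) := by
  induction n generalizing x with
  | zero => simp [aS, cS_zero]
  | succ n ih =>
    rw [iteratedDeriv_succ]
    have hfn : iteratedDeriv n (fun t : ℝ => 1 / Real.cosh t)
        = fun y => ∑ k ∈ range (n + 1), aS n k * (1 / Real.cosh y * Real.tanh y ^ k) :=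
      funext ih
    rw [hfn]
    have hd : HasDerivAt
        (fun y : ℝ => ∑ k ∈ range (n + 1), aS n k * (1 / Real.cosh y * Real.tanh y ^ k))
        (∑ k ∈ range (n + 1), aS n k *
          ((k : ℝ) * (1 / Real.cosh x * Real.tanh x ^ (k - 1)) -
            ((k : ℝ) + 1) * (1 / Real.cosh x * Real.tanh x ^ (k + 1)))) x :=
      HasDerivAt.fun_sum fun k _ => (hasDerivAt_sech_mul k x).const_mul (aS n k)
    rw [hd.deriv]
    exact sum_step n (fun j => 1 / Real.cosh x * Real.tanh x ^ j)

theorem stmt19 (n : ℕ) (x : ℝ) :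
    iteratedDeriv n (fun t : ℝ => 1 / Real.cosh t) x =
      (1 / Real.cosh x) *
        ∑ k ∈ (Finset.range (n + 1)).filter (fun k => n % 2 = k % 2),
          (-1 : ℝ) ^ ((n + k) / 2) * (k.factorial : ℝ) * S n k * Real.tanh x ^ k := by
  rw [main_A n x, Finset.mul_sum, Finset.sum_filter]
  refine Finset.sum_congr rfl fun k hk => ?_
  by_cases hp : n % 2 = k % 2
  · rw [if_pos hp]
    have hfac : (k.factorial : ℝ) ≠ 0 := Nat.cast_ne_zero.2 k.factorial_ne_zero
    have hS : (k.factorial : ℝ) * S n k = cS n k := by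
      rw [S, cS, mul_div_cancel₀ _ hfac]
    rw [aS, ← hS]; ring
  · rw [if_neg hp, aS, cS_eq_zero_of_parity n k hp]; ring
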